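/- arXiv:2502.03205 — 3 statements merged into one kernel-verified Lean document; each statement's English description precedes it below -/
import Mathlib

section
/- Let α, β ∈ [0,∞), T ∈ (0,∞), and let f : [0,T] → [0,∞) be a bounded measurable function satisfying f(t) ≤ α + β (∫₀ᵗ f(s)² ds)^{1/2} for all t ∈ [0,T]. Then for all t ∈ [0,T] it holds that f(t) ≤ √2 · α · e^{β² t}. -/
open MeasureTheory intervalIntegral Set Real

theorem stmt_3 (α β T : ℝ) (hα : 0 ≤ α) (hβ : 0 ≤ β) (hT : 0 < T) (f : ℝ → ℝ)
    (hf_nonneg : ∀ t ∈ Set.Icc (0 : ℝ) T, 0 ≤ f t)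
    (hf_meas : Measurable f)
    (hf_bdd : ∃ B : ℝ, ∀ t ∈ Set.Icc (0 : ℝ) T, f t ≤ B)
    (h : ∀ t ∈ Set.Icc (0 : ℝ) T,
      f t ≤ α + β * Real.sqrt (∫ s in (0 : ℝ)..t, (f s) ^ 2)) :
    ∀ t ∈ Set.Icc (0 : ℝ) T, f t ≤ Real.sqrt 2 * α * Real.exp (β ^ 2 * t) := by
  obtain ⟨B, hB⟩ := hf_bdd
  set M : ℝ := max B 0 with hM
  -- clamped function
  set fc : ℝ → ℝ := (Set.Icc (0:ℝ) T).indicator f with hfc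
  have hfc_meas : Measurable fc := hf_meas.indicator measurableSet_Icc
  have hfc_nonneg : ∀ s, 0 ≤ fc s := by
    intro s
    by_cases hs : s ∈ Set.Icc (0:ℝ) T
    · simp [hfc, Set.indicator_of_mem hs, hf_nonneg s hs]
    · simp [hfc, Set.indicator_of_notMem hs]
  have hfc_le : ∀ s, fc s ≤ M := by
    intro s
    by_cases hs : s ∈ Set.Icc (0:ℝ) T
    · simp only [hfc, Set.indicator_of_mem hs]
      exact (hB s hs).trans (le_max_left _ _)
    · simp [hfc, hM, Set.indicator_of_notMem hs, le_max_right B 0]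
  have hfc_eq : ∀ s ∈ Set.Icc (0:ℝ) T, fc s = f s := fun s hs =>
    Set.indicator_of_mem hs f
  -- fc^2 is interval integrable on any interval
  have hint : ∀ a b : ℝ, IntervalIntegrable (fun s => fc s ^ 2) volume a b := by
    intro a b
    rw [intervalIntegrable_iff]
    apply Measure.integrableOn_of_bounded (M := M ^ 2) measure_Ioc_lt_top.ne
      ((hfc_meas.pow_const 2).aestronglyMeasurable)
    filter_upwards with s
    rw [Real.norm_eq_abs, abs_of_nonneg (by positivity)]
    exact pow_le_pow_left₀ (hfc_nonneg s) (hfc_le s) 2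
  set g : ℝ → ℝ := fun t => ∫ s in (0:ℝ)..t, fc s ^ 2 with hg
  have hg_cont : Continuous g := intervalIntegral.continuous_primitive hint 0
  have hg_eq : ∀ t ∈ Set.Icc (0:ℝ) T, g t = ∫ s in (0:ℝ)..t, f s ^ 2 := by
    intro t ht
    apply intervalIntegral.integral_congr
    intro s hs
    rw [Set.uIcc_of_le ht.1] at hs
    simp only [hfc_eq s ⟨hs.1, hs.2.trans ht.2⟩]
  have hg_nonneg : ∀ t, 0 ≤ t → 0 ≤ g t := by
    intro t ht
    exact intervalIntegral.integral_nonneg ht (fun s _ => by positivity)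
  -- pointwise squared inequality
  have hkey : ∀ s ∈ Set.Icc (0:ℝ) T, fc s ^ 2 ≤ 2 * α ^ 2 + 2 * β ^ 2 * g s := by
    intro s hs
    have h1 : f s ≤ α + β * Real.sqrt (g s) := by
      rw [hg_eq s hs]; exact h s hs
    have h2 : (0:ℝ) ≤ Real.sqrt (g s) := Real.sqrt_nonneg _
    have h3 : Real.sqrt (g s) ^ 2 = g s := Real.sq_sqrt (hg_nonneg s hs.1)
    have h4 : 0 ≤ f s := hf_nonneg s hs
    rw [hfc_eq s hs]
    nlinarith [sq_nonneg (α - β * Real.sqrt (g s))]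
  -- the comparison function
  set φ : ℝ → ℝ := fun s => 2 * α ^ 2 + 2 * β ^ 2 * g s with hφ
  have hφ_cont : Continuous φ := continuous_const.add (continuous_const.mul hg_cont)
  set H : ℝ → ℝ := fun t => ∫ s in (0:ℝ)..t, φ s with hH
  have hφ_nonneg : ∀ s, 0 ≤ s → 0 ≤ φ s := fun s hs => by
    have := hg_nonneg s hs; positivity
  have hgH : ∀ t ∈ Set.Icc (0:ℝ) T, g t ≤ H t := by
    intro t ht
    apply intervalIntegral.integral_mono_on ht.1 (hint 0 t)
      ((hφ_cont.intervalIntegrable 0 t))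
    intro s hs
    exact hkey s ⟨hs.1, hs.2.trans ht.2⟩
  have hH_nonneg : ∀ t, 0 ≤ t → 0 ≤ H t := by
    intro t ht
    exact intervalIntegral.integral_nonneg ht (fun s hs => hφ_nonneg s hs.1)
  -- Gronwall bound for H on [0, t₀]
  intro t₀ ht₀
  have hgron : ‖H t₀‖ ≤ gronwallBound 0 (2 * β ^ 2) (2 * α ^ 2) (t₀ - 0) := by
    apply norm_le_gronwallBound_of_norm_deriv_right_le (f' := φ)
      ((intervalIntegral.continuous_primitive (fun a b => hφ_cont.intervalIntegrable a b) 0).continuousOn)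
    · intro x _
      exact (hφ_cont.integral_hasStrictDerivAt 0 x).hasDerivAt.hasDerivWithinAt
    · simp [hH, intervalIntegral.integral_same]
    · intro x hx
      rw [Real.norm_eq_abs, abs_of_nonneg (hφ_nonneg x hx.1),
        Real.norm_eq_abs, abs_of_nonneg (hH_nonneg x hx.1)]
      have : g x ≤ H x := hgH x ⟨hx.1, hx.2.le.trans ht₀.2⟩
      simp only [hφ]
      nlinarith [sq_nonneg β]
    · exact Set.mem_Icc.mpr ⟨ht₀.1, le_refl _⟩
  rw [Real.norm_eq_abs, abs_of_nonneg (hH_nonneg t₀ ht₀.1), sub_zero] at hgron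
  -- compute: 2β² * gronwallBound ≤ 2α² (e^{2β²t} - 1)
  have hbound : 2 * β ^ 2 * H t₀ ≤ 2 * α ^ 2 * (Real.exp (2 * β ^ 2 * t₀) - 1) := by
    by_cases hβ0 : (2 : ℝ) * β ^ 2 = 0
    · rw [hβ0]; simp
    · rw [gronwallBound_of_K_ne_0 hβ0] at hgron
      simp only [zero_mul, zero_add] at hgron
      have h2 : (0:ℝ) < 2 * β ^ 2 := lt_of_le_of_ne (by positivity) (Ne.symm hβ0)
      calc 2 * β ^ 2 * H t₀ ≤ 2 * β ^ 2 * (2 * α ^ 2 / (2 * β ^ 2) * (Real.exp (2 * β ^ 2 * t₀) - 1)) := by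
            apply mul_le_mul_of_nonneg_left hgron h2.le
        _ = 2 * α ^ 2 * (Real.exp (2 * β ^ 2 * t₀) - 1) := by
            have hb0 : β ≠ 0 := by rintro rfl; simp at h2
            field_simp
  -- conclude
  have hsq : f t₀ ^ 2 ≤ 2 * α ^ 2 * Real.exp (2 * β ^ 2 * t₀) := by
    have h1 : fc t₀ ^ 2 ≤ 2 * α ^ 2 + 2 * β ^ 2 * g t₀ := hkey t₀ ht₀
    rw [hfc_eq t₀ ht₀] at h1
    have h2 : g t₀ ≤ H t₀ := hgH t₀ ht₀
    nlinarith [sq_nonneg β]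
  have hR : (Real.sqrt 2 * α * Real.exp (β ^ 2 * t₀)) ^ 2
      = 2 * α ^ 2 * Real.exp (2 * β ^ 2 * t₀) := by
    rw [mul_pow, mul_pow, Real.sq_sqrt (by norm_num : (0:ℝ) ≤ 2),
      ← Real.exp_nat_mul]
    ring_nf
  have hRnn : 0 ≤ Real.sqrt 2 * α * Real.exp (β ^ 2 * t₀) := by positivity
  nlinarith [hf_nonneg t₀ ht₀]
end

section
/- Let d ∈ ℕ, c ∈ [1,∞), and let μ : ℝᵈ × ℝᵈ → ℝᵈ be measurable with ‖μ(x₁,x₂) − μ(y₁,y₂)‖ ≤ (c/2)‖x₁−y₁‖ + (c/2)‖x₂−y₂‖ for all x₁,x₂,y₁,y₂ ∈ ℝᵈ. Let X, Y : Ω → ℝᵈ be square-integrable random variables and define g(x) = E[μ(x,X)] and h(y) = E[μ(y,Y)]. Then ‖g(X) − h(Y)‖_{L²(ℙ;ℝᵈ)} ≤ c ‖X − Y‖_{L²(ℙ;ℝᵈ)}. -/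
open MeasureTheory

theorem stmt_5 {Ω : Type*} [MeasurableSpace Ω] (P : MeasureTheory.Measure Ω) [IsProbabilityMeasure P]
    (d : ℕ) (c : ℝ) (hc : 1 ≤ c)
    (μ : EuclideanSpace ℝ (Fin d) → EuclideanSpace ℝ (Fin d) → EuclideanSpace ℝ (Fin d))
    (hμ_meas : Measurable (fun p : EuclideanSpace ℝ (Fin d) × EuclideanSpace ℝ (Fin d) => μ p.1 p.2))
    (hLip : ∀ x₁ x₂ y₁ y₂ : EuclideanSpace ℝ (Fin d),
      ‖μ x₁ x₂ - μ y₁ y₂‖ ≤ c / 2 * ‖x₁ - y₁‖ + c / 2 * ‖x₂ - y₂‖)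
    (X Y : Ω → EuclideanSpace ℝ (Fin d)) (hX_meas : Measurable X) (hY_meas : Measurable Y)
    (hX : MemLp X 2 P) (hY : MemLp Y 2 P)
    (g h : EuclideanSpace ℝ (Fin d) → EuclideanSpace ℝ (Fin d))
    (hg : ∀ x, g x = ∫ ω : Ω, μ x (X ω) ∂P) (hh : ∀ y, h y = ∫ ω : Ω, μ y (Y ω) ∂P) :
    Real.sqrt (∫ ω : Ω, ‖g (X ω) - h (Y ω)‖ ^ 2 ∂P) ≤
      c * Real.sqrt (∫ ω : Ω, ‖X ω - Y ω‖ ^ 2 ∂P) := by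
  have hc0 : (0:ℝ) ≤ c / 2 := by linarith
  have hXY : MemLp (fun ω => X ω - Y ω) 2 P := hX.sub hY
  have hf2_int : Integrable (fun ω => ‖X ω - Y ω‖ ^ 2) P := by
    have := hXY.integrable_norm_rpow two_ne_zero ENNReal.ofNat_ne_top
    simpa [Real.rpow_natCast] using this
  have hf_int : Integrable (fun ω => ‖X ω - Y ω‖) P := (hXY.integrable one_le_two).norm
  set S := Real.sqrt (∫ ω : Ω, ‖X ω - Y ω‖ ^ 2 ∂P) with hSdef
  have hS0 : 0 ≤ S := Real.sqrt_nonneg _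
  have hS2 : S ^ 2 = ∫ ω : Ω, ‖X ω - Y ω‖ ^ 2 ∂P :=
    Real.sq_sqrt (integral_nonneg fun ω => by positivity)
  -- Cauchy–Schwarz: ∫ ‖X-Y‖ ≤ S
  have hIS : ∫ ω, ‖X ω - Y ω‖ ∂P ≤ S := by
    have h22 : (2:ℝ).HolderConjugate 2 := Real.holderConjugate_iff.mpr ⟨one_lt_two, by norm_num⟩
    have hXY' : MemLp (fun ω => ‖X ω - Y ω‖) (ENNReal.ofReal 2) P := by
      simpa [ENNReal.ofReal_ofNat] using hXY.norm
    have hone : MemLp (fun _ : Ω => (1:ℝ)) (ENNReal.ofReal 2) P := memLp_const _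
    have hH := integral_mul_le_Lp_mul_Lq_of_nonneg (μ := P)
      (f := fun ω => ‖X ω - Y ω‖) (g := fun _ : Ω => (1:ℝ)) h22
      (.of_forall fun ω => norm_nonneg _) (.of_forall fun _ => zero_le_one) hXY' hone
    simp only [mul_one, Real.one_rpow] at hH
    have h1 : (∫ _ : Ω, (1:ℝ) ∂P) = 1 := by simp
    rw [h1, Real.one_rpow, mul_one] at hH
    calc ∫ ω, ‖X ω - Y ω‖ ∂P ≤ (∫ ω, ‖X ω - Y ω‖ ^ (2:ℝ) ∂P) ^ ((1:ℝ)/2) := hH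
      _ = S := by
          rw [hSdef, Real.sqrt_eq_rpow]
          congr 1
          exact integral_congr_ae (.of_forall fun ω => by
            norm_num [Real.rpow_natCast])
  -- integrability of ω' ↦ μ x (Z ω')
  have hμint : ∀ (x : EuclideanSpace ℝ (Fin d)) (Z : Ω → EuclideanSpace ℝ (Fin d)),
      Measurable Z → MemLp Z 2 P → Integrable (fun ω => μ x (Z ω)) P := by
    intro x Z hZm hZp
    have hm : Measurable fun ω => μ x (Z ω) := hμ_meas.comp (measurable_const.prodMk hZm)
    refine Integrable.mono' (g := fun ω => ‖μ x 0‖ + c / 2 * ‖Z ω‖)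
      ((integrable_const _).add ((hZp.integrable one_le_two).norm.const_mul _))
      hm.aestronglyMeasurable (.of_forall fun ω => ?_)
    have h1 := hLip x (Z ω) x 0
    have h2 : ‖μ x (Z ω)‖ ≤ ‖μ x (Z ω) - μ x 0‖ + ‖μ x 0‖ := by
      simpa using norm_add_le (μ x (Z ω) - μ x 0) (μ x 0)
    simp only [sub_self, norm_zero, sub_zero, mul_zero, zero_add] at h1
    linarith
  -- pointwise bound
  have hpt : ∀ ω, ‖g (X ω) - h (Y ω)‖ ≤ c / 2 * ‖X ω - Y ω‖ + c / 2 * S := by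
    intro ω
    rw [hg, hh, ← integral_sub (hμint _ X hX_meas hX) (hμint _ Y hY_meas hY)]
    calc ‖∫ ω', μ (X ω) (X ω') - μ (Y ω) (Y ω') ∂P‖
        ≤ ∫ ω', ‖μ (X ω) (X ω') - μ (Y ω) (Y ω')‖ ∂P := norm_integral_le_integral_norm _
      _ ≤ ∫ ω', (c / 2 * ‖X ω - Y ω‖ + c / 2 * ‖X ω' - Y ω'‖) ∂P :=
          integral_mono_of_nonneg (.of_forall fun ω' => norm_nonneg _)
            ((integrable_const _).add (hf_int.const_mul _))
            (.of_forall fun ω' => hLip _ _ _ _)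
      _ = c / 2 * ‖X ω - Y ω‖ + c / 2 * ∫ ω', ‖X ω' - Y ω'‖ ∂P := by
          rw [integral_add (integrable_const _) (hf_int.const_mul _), integral_const,
            probReal_univ, one_smul, integral_const_mul]
      _ ≤ c / 2 * ‖X ω - Y ω‖ + c / 2 * S := by
          have := mul_le_mul_of_nonneg_left hIS hc0; linarith
  -- main estimate
  have hb_int : Integrable (fun ω => (c / 2 * ‖X ω - Y ω‖ + c / 2 * S) ^ 2) P := by
    have heq : (fun ω => (c / 2 * ‖X ω - Y ω‖ + c / 2 * S) ^ 2) =
        fun ω => (c / 2) ^ 2 * ‖X ω - Y ω‖ ^ 2 +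
          (2 * (c / 2) * (c / 2 * S)) * ‖X ω - Y ω‖ + (c / 2 * S) ^ 2 := by
      funext ω; ring
    rw [heq]
    exact ((hf2_int.const_mul _).add (hf_int.const_mul _)).add (integrable_const _)
  have key : ∫ ω, ‖g (X ω) - h (Y ω)‖ ^ 2 ∂P ≤ c ^ 2 * S ^ 2 := by
    calc ∫ ω, ‖g (X ω) - h (Y ω)‖ ^ 2 ∂P
        ≤ ∫ ω, (c / 2 * ‖X ω - Y ω‖ + c / 2 * S) ^ 2 ∂P :=
          integral_mono_of_nonneg (.of_forall fun ω => by positivity) hb_int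
            (.of_forall fun ω => pow_le_pow_left₀ (norm_nonneg _) (hpt ω) 2)
      _ = (c / 2) ^ 2 * (∫ ω, ‖X ω - Y ω‖ ^ 2 ∂P) +
          (2 * (c / 2) * (c / 2 * S)) * (∫ ω, ‖X ω - Y ω‖ ∂P) + (c / 2 * S) ^ 2 := by
          have i1 : Integrable (fun ω => (c / 2) ^ 2 * ‖X ω - Y ω‖ ^ 2 +
              (2 * (c / 2) * (c / 2 * S)) * ‖X ω - Y ω‖) P :=
            (hf2_int.const_mul _).add (hf_int.const_mul _)
          have e0 : ∫ ω, (c / 2 * ‖X ω - Y ω‖ + c / 2 * S) ^ 2 ∂P =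
              ∫ ω, ((c / 2) ^ 2 * ‖X ω - Y ω‖ ^ 2 +
                (2 * (c / 2) * (c / 2 * S)) * ‖X ω - Y ω‖) + (c / 2 * S) ^ 2 ∂P :=
            integral_congr_ae (.of_forall fun ω => by ring)
          rw [e0, integral_add i1 (integrable_const _),
            integral_add (hf2_int.const_mul _) (hf_int.const_mul _),
            integral_const_mul, integral_const_mul, integral_const,
            probReal_univ, one_smul]
      _ ≤ c ^ 2 * S ^ 2 := by
          have hSI : S * (∫ ω, ‖X ω - Y ω‖ ∂P) ≤ S ^ 2 := by
            nlinarith [mul_le_mul_of_nonneg_left hIS hS0]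
          nlinarith [hSI, sq_nonneg c, hS2]
  calc Real.sqrt (∫ ω, ‖g (X ω) - h (Y ω)‖ ^ 2 ∂P)
      ≤ Real.sqrt (c ^ 2 * S ^ 2) := Real.sqrt_le_sqrt key
    _ = c * S := by
        rw [show c ^ 2 * S ^ 2 = (c * S) ^ 2 by ring, Real.sqrt_sq (by positivity)]
end

section
/- Let m ∈ ℕ with m ≥ 2 (or m ≥ 1), c₁, c₂ ∈ [0,∞), and let (a_n)_{n∈ℕ₀} ⊆ [0,∞) satisfy a₀ = 0 and, for all n ∈ ℕ, a_n ≤ c₁ m^{-n} + c₂ n + ∑_{ℓ=1}^{n-1} (2 a_ℓ + 2 a_{ℓ-1}). Then for all n ∈ ℕ it holds that a_n ≤ (3/2) 4ⁿ c₁ + c₂ (4ⁿ − 1). -/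
theorem stmt_8 (m : ℕ) (hm : 1 ≤ m) (c₁ c₂ : ℝ) (hc₁ : 0 ≤ c₁) (hc₂ : 0 ≤ c₂)
    (a : ℕ → ℝ) (ha : ∀ n, 0 ≤ a n) (h0 : a 0 = 0)
    (hrec : ∀ n : ℕ, 1 ≤ n →
      a n ≤ c₁ * ((m : ℝ) ^ (n : ℕ))⁻¹ + c₂ * n +
        ∑ ℓ ∈ Finset.Ico 1 n, (2 * a ℓ + 2 * a (ℓ - 1))) :
    ∀ n : ℕ, 1 ≤ n → a n ≤ 3 / 2 * 4 ^ n * c₁ + c₂ * (4 ^ n - 1) := by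
  set b : ℕ → ℝ := fun n => 3 / 2 * 4 ^ n * c₁ + c₂ * (4 ^ n - 1) with hbdef
  set B : ℕ → ℝ := fun n => if n = 0 then 0 else b n with hBdef
  have h4 : ∀ n : ℕ, (1 : ℝ) ≤ 4 ^ n := fun n => one_le_pow₀ (by norm_num)
  have hbnn : ∀ n, 0 ≤ b n := by
    intro n
    have := h4 n
    simp only [hbdef]
    nlinarith
  have hBb : ∀ n, B n ≤ b n := by
    intro n
    simp only [hBdef]
    split
    · exact hbnn n
    · exact le_refl _
  have hBnn : ∀ n, 0 ≤ B n := by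
    intro n
    simp only [hBdef]
    split
    · exact le_refl _
    · exact hbnn n
  have hsum : ∀ n : ℕ, 1 ≤ n →
      ∑ ℓ ∈ Finset.Ico 1 n, (2 * B ℓ + 2 * B (ℓ - 1)) ≤ b n - c₁ - c₂ * n := by
    intro n hn
    induction n, hn using Nat.le_induction with
    | base =>
      simp only [Finset.Ico_self, Finset.sum_empty, hbdef]
      norm_num
      nlinarith
    | succ n hn ih =>
      rw [Finset.sum_Ico_succ_top hn]
      have hBn : B n = b n := by
        simp only [hBdef]
        rw [if_neg (by omega)]
      have hBn1 : B (n - 1) ≤ b (n - 1) := hBb _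
      obtain ⟨k, rfl⟩ : ∃ k, n = k + 1 := ⟨n - 1, by omega⟩
      rw [hBn]
      have hBk : B k ≤ b k := by
        have := hBb k
        simpa using this
      have h4k := h4 k
      have : b (k + 1) + 2 * b (k + 1) + 2 * b k ≤ b (k + 1 + 1) - c₂ := by
        simp only [hbdef]
        push_cast
        ring_nf
        nlinarith [h4k, hc₁, hc₂]
      push_cast
      push_cast at ih this
      linarith [hBk, ih, this]
  have key : ∀ n, a n ≤ B n := by
    intro n
    induction n using Nat.strong_induction_on with
    | _ n ih =>
      match n with
      | 0 => simp [hBdef, h0]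
      | Nat.succ k =>
        have h1 : 1 ≤ k + 1 := by omega
        have hr := hrec (k + 1) h1
        have hsumle : ∑ ℓ ∈ Finset.Ico 1 (k + 1), (2 * a ℓ + 2 * a (ℓ - 1)) ≤
            ∑ ℓ ∈ Finset.Ico 1 (k + 1), (2 * B ℓ + 2 * B (ℓ - 1)) := by
          apply Finset.sum_le_sum
          intro ℓ hℓ
          rw [Finset.mem_Ico] at hℓ
          have i1 := ih ℓ (by omega)
          have i2 := ih (ℓ - 1) (by omega)
          linarith
        have hminv : c₁ * ((m : ℝ) ^ (k + 1))⁻¹ ≤ c₁ := by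
          have hm1 : (1 : ℝ) ≤ (m : ℝ) ^ (k + 1) := one_le_pow₀ (by exact_mod_cast hm)
          have : ((m : ℝ) ^ (k + 1))⁻¹ ≤ 1 := inv_le_one_of_one_le₀ hm1
          nlinarith
        have hS := hsum (k + 1) h1
        have hBeq : B (k + 1) = b (k + 1) := by
          simp only [hBdef]
          rw [if_neg (by omega)]
        rw [hBeq]
        push_cast at hr hS hminv ⊢
        linarith [hr, hsumle, hS, hminv]
  intro n hn
  have := key n
  have hBeq : B n = b n := by
    simp only [hBdef]
    rw [if_neg (by omega)]
  rw [hBeq] at this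
  exact this
end
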